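/- Let π be a distribution on {0,1}^d with augmented second-moment matrix [[M, m],[mᵀ,1]] positive definite, and let μ: ℝ → (0,1) be strictly monotonic and differentiable with μ' > 0. Then for every a ∈ ℝ^{d+1}, the Jacobian determinant of f(a) = ∑_{γ∈{0,1}^d} π(γ) μ(a_{d+1} + ∑_{k=1}^d a_k γ_k) (γᵀ, 1)ᵀ is strictly positive; in particular, f is locally injective everywhere. -/

import Mathlib

open Finset Matrix

lemma quad_sum' {ι : Type*} [Fintype ι] {n : Type*} [Fintype n] [DecidableEq n]
    (c : ι → ℝ) (e : ι → n → ℝ) (x : n → ℝ) :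
    x ⬝ᵥ ((∑ γ, c γ • vecMulVec (e γ) (e γ)) *ᵥ x)
      = ∑ γ, c γ * (∑ i, e γ i * x i)^2 := by
  simp only [dotProduct, mulVec, Matrix.sum_apply, Matrix.smul_apply, vecMulVec_apply,
    smul_eq_mul, Finset.mul_sum, Finset.sum_mul, pow_two]
  conv_lhs => enter [2, x1]; rw [Finset.sum_comm]
  rw [Finset.sum_comm]
  refine Finset.sum_congr rfl fun γ _ => Finset.sum_congr rfl fun i _ =>
    Finset.sum_congr rfl fun j _ => by ring

lemma herm_sum' {ι : Type*} [Fintype ι] {n : Type*} [Fintype n] [DecidableEq n]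
    (c : ι → ℝ) (e : ι → n → ℝ) :
    (∑ γ, c γ • vecMulVec (e γ) (e γ)).IsHermitian := by
  refine Matrix.IsHermitian.ext fun i j => ?_
  simp [Matrix.sum_apply, vecMulVec_apply, mul_comm, mul_left_comm]

lemma strictMono_mul_pos' {μ : ℝ → ℝ} (h : StrictMono μ) {s t : ℝ} (hst : s ≠ t) :
    0 < (μ s - μ t) * (s - t) := by
  rcases hst.lt_or_gt with hlt | hlt
  · exact mul_pos_of_neg_of_neg (sub_neg.2 (h hlt)) (sub_neg.2 hlt)
  · exact mul_pos (sub_pos.2 (h hlt)) (sub_pos.2 hlt)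

lemma strictMono_mul_nonneg' {μ : ℝ → ℝ} (h : StrictMono μ) (s t : ℝ) :
    0 ≤ (μ s - μ t) * (s - t) := by
  rcases eq_or_ne s t with rfl | hst
  · simp
  · exact (strictMono_mul_pos' h hst).le

theorem stmt_12 (d : ℕ) (π : (Fin d → Bool) → ℝ)
    (hπ : ∀ γ, 0 ≤ π γ) (hπsum : ∑ γ : Fin d → Bool, π γ = 1)
    (ext : (Fin d → Bool) → Fin (d + 1) → ℝ)
    (hext : ∀ γ, ext γ = Fin.snoc (fun i => if γ i then (1:ℝ) else 0) 1)
    (hpos : (∑ γ : Fin d → Bool, π γ • vecMulVec (ext γ) (ext γ)).PosDef)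
    (μ : ℝ → ℝ) (hμmono : StrictMono μ) (hμdiff : Differentiable ℝ μ)
    (hμ' : ∀ x, 0 < deriv μ x)
    (f : (Fin (d + 1) → ℝ) → Fin (d + 1) → ℝ)
    (hf : ∀ a, f a = ∑ γ : Fin d → Bool,
      π γ • (μ (∑ i : Fin (d + 1), a i * ext γ i) • ext γ)) :
    (∀ a : Fin (d + 1) → ℝ,
      0 < (∑ γ : Fin d → Bool,
            (π γ * deriv μ (∑ i : Fin (d + 1), a i * ext γ i))
              • vecMulVec (ext γ) (ext γ)).det) ∧
    (∀ a : Fin (d + 1) → ℝ, ∃ U ∈ nhds a, Set.InjOn f U) := by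
  -- key: for nonzero x there is γ with π γ > 0 and ⟪ext γ, x⟫ ≠ 0
  have key : ∀ x : Fin (d + 1) → ℝ, x ≠ 0 →
      ∃ γ, 0 < π γ ∧ (∑ i, ext γ i * x i) ≠ 0 := by
    intro x hx
    have h := hpos.dotProduct_mulVec_pos hx
    rw [star_trivial, quad_sum'] at h
    obtain ⟨γ, -, hγ⟩ := Finset.exists_ne_zero_of_sum_ne_zero h.ne'
    refine ⟨γ, lt_of_le_of_ne (hπ γ) (fun h' => hγ (by rw [← h']; ring)), fun h' => hγ ?_⟩
    rw [h']; ring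
  constructor
  · intro a
    have hpd : (∑ γ : Fin d → Bool,
        (π γ * deriv μ (∑ i : Fin (d + 1), a i * ext γ i))
          • vecMulVec (ext γ) (ext γ)).PosDef := by
      refine PosDef.of_dotProduct_mulVec_pos (herm_sum' _ _) fun x hx => ?_
      rw [star_trivial, quad_sum']
      obtain ⟨γ₀, hπ₀, hd₀⟩ := key x hx
      refine Finset.sum_pos' (fun γ _ => ?_) ⟨γ₀, Finset.mem_univ _, ?_⟩
      · exact mul_nonneg (mul_nonneg (hπ γ) (hμ' _).le) (sq_nonneg _)
      · exact mul_pos (mul_pos hπ₀ (hμ' _)) (lt_of_le_of_ne (sq_nonneg _) (Ne.symm (pow_ne_zero 2 hd₀)))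
    exact hpd.det_pos
  · intro a
    refine ⟨Set.univ, Filter.univ_mem, fun u _ v _ huv => ?_⟩
    by_contra hne
    obtain ⟨γ₀, hπ₀, hd₀⟩ := key (u - v) (sub_ne_zero.2 hne)
    -- expand ⟪y, f w⟫
    have expand : ∀ w y : Fin (d + 1) → ℝ,
        (∑ i, y i * f w i)
          = ∑ γ, π γ * μ (∑ i, w i * ext γ i) * (∑ i, y i * ext γ i) := by
      intro w y
      rw [hf]
      simp only [Finset.sum_apply, Pi.smul_apply, smul_eq_mul, Finset.mul_sum]
      rw [Finset.sum_comm]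
      exact Finset.sum_congr rfl fun γ _ => Finset.sum_congr rfl fun i _ => by ring
    have hdot : ∀ γ, (∑ i, (u - v) i * ext γ i)
        = (∑ i, u i * ext γ i) - (∑ i, v i * ext γ i) := by
      intro γ
      rw [← Finset.sum_sub_distrib]
      exact Finset.sum_congr rfl fun i _ => by simp [sub_mul]
    have hsum0 : ∑ γ, π γ * ((μ (∑ i, u i * ext γ i) - μ (∑ i, v i * ext γ i))
        * ((∑ i, u i * ext γ i) - (∑ i, v i * ext γ i))) = 0 := by
      have h1 := expand u (u - v)
      have h2 := expand v (u - v)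
      rw [huv] at h1
      have := h1.symm.trans h2
      calc ∑ γ, π γ * ((μ (∑ i, u i * ext γ i) - μ (∑ i, v i * ext γ i))
            * ((∑ i, u i * ext γ i) - (∑ i, v i * ext γ i)))
          = (∑ γ, π γ * μ (∑ i, u i * ext γ i) * (∑ i, (u - v) i * ext γ i))
            - ∑ γ, π γ * μ (∑ i, v i * ext γ i) * (∑ i, (u - v) i * ext γ i) := by
            rw [← Finset.sum_sub_distrib]
            refine Finset.sum_congr rfl fun γ _ => ?_
            rw [hdot γ]; ring
        _ = 0 := by rw [this, sub_self]
    have hposS : 0 < ∑ γ, π γ * ((μ (∑ i, u i * ext γ i) - μ (∑ i, v i * ext γ i))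
        * ((∑ i, u i * ext γ i) - (∑ i, v i * ext γ i))) := by
      refine Finset.sum_pos' (fun γ _ => mul_nonneg (hπ γ) (strictMono_mul_nonneg' hμmono _ _))
        ⟨γ₀, Finset.mem_univ _, mul_pos hπ₀ (strictMono_mul_pos' hμmono ?_)⟩
      intro h
      apply hd₀
      have : (∑ i, (u - v) i * ext γ₀ i) = 0 := by rw [hdot γ₀, h, sub_self]
      rw [← this]
      exact Finset.sum_congr rfl fun i _ => mul_comm _ _
    exact hposS.ne' hsum0
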